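/- Any convex polygon in RP^2 with all vertices on the ideal boundary ∂H^2 having at least five vertices is strongly ideal, i.e., its interior is disjoint from ∂H^2. -/

import Mathlib

open Projectivization
open scoped LinearAlgebra.Projectivization

noncomputable section
open scoped Classical
set_option maxHeartbeats 1000000

/-- Topology on the real projective plane. -/
instance : TopologicalSpace (ℙ ℝ (Fin 3 → ℝ)) :=
  inferInstanceAs (TopologicalSpace (Quotient (projectivizationSetoid ℝ (Fin 3 → ℝ))))

/-- The affine-chart coordinates of a projective point, for the chart determined by the
linear functional `f`. -/
def chartPt (f : (Fin 3 → ℝ) →ₗ[ℝ] ℝ) (x : ℙ ℝ (Fin 3 → ℝ)) : Fin 3 → ℝ :=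
  (f x.rep)⁻¹ • x.rep

/-- `A` is contained in the affine chart determined by `f`. -/
def InChart (f : (Fin 3 → ℝ) →ₗ[ℝ] ℝ) (A : Set (ℙ ℝ (Fin 3 → ℝ))) : Prop :=
  ∀ x ∈ A, f x.rep ≠ 0

/-- The quadratic form `x₀² + x₁² - x₂²` defining the Klein model of `H²` in `ℝP²`. -/
def kleinForm (v : Fin 3 → ℝ) : ℝ := v 0 ^ 2 + v 1 ^ 2 - v 2 ^ 2

/-- The ideal boundary `∂H²`: the conic of the Klein model in `ℝP²`. -/
def idealBoundary : Set (ℙ ℝ (Fin 3 → ℝ)) := {x | kleinForm x.rep = 0}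

/-- The Klein model of the hyperbolic plane `H²` inside `ℝP²`. -/
def kleinH2 : Set (ℙ ℝ (Fin 3 → ℝ)) := {x | kleinForm x.rep < 0}

/-- `P` is a convex polygon in `ℝP²` with vertex set `Vs`: in some affine chart it is the
convex hull of the points of `Vs`, each of which is a genuine vertex (an extreme point). -/
def IsPolygon (P : Set (ℙ ℝ (Fin 3 → ℝ))) (Vs : Finset (ℙ ℝ (Fin 3 → ℝ))) : Prop :=
  ∃ f : (Fin 3 → ℝ) →ₗ[ℝ] ℝ, f ≠ 0 ∧ InChart f P ∧ (Vs : Set (ℙ ℝ (Fin 3 → ℝ))) ⊆ P ∧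
    chartPt f '' P = convexHull ℝ (chartPt f '' (Vs : Set (ℙ ℝ (Fin 3 → ℝ)))) ∧
    ∀ v ∈ Vs, chartPt f v ∉ convexHull ℝ (chartPt f '' ((Vs.erase v : Finset _) : Set (ℙ ℝ (Fin 3 → ℝ))))

/-! ### Auxiliary lemmas -/

lemma kleinForm_smul (c : ℝ) (w : Fin 3 → ℝ) : kleinForm (c • w) = c ^ 2 * kleinForm w := by
  simp [kleinForm, Pi.smul_apply, smul_eq_mul]; ring

lemma f_chartPt (f : (Fin 3 → ℝ) →ₗ[ℝ] ℝ) (x : ℙ ℝ (Fin 3 → ℝ)) (h : f x.rep ≠ 0) :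
    f (chartPt f x) = 1 := by
  simp [chartPt, map_smul, smul_eq_mul, inv_mul_cancel₀ h]

lemma chartPt_ne_zero (f : (Fin 3 → ℝ) →ₗ[ℝ] ℝ) (x : ℙ ℝ (Fin 3 → ℝ)) (h : f x.rep ≠ 0) :
    chartPt f x ≠ 0 := by
  intro h0
  have := f_chartPt f x h
  rw [h0] at this
  simp at this

lemma mk_chartPt (f : (Fin 3 → ℝ) →ₗ[ℝ] ℝ) (x : ℙ ℝ (Fin 3 → ℝ)) (h : f x.rep ≠ 0) :
    Projectivization.mk ℝ (chartPt f x) (chartPt_ne_zero f x h) = x := by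
  conv_rhs => rw [← x.mk_rep]
  rw [mk_eq_mk_iff']
  exact ⟨(f x.rep)⁻¹, rfl⟩

lemma chartPt_mk (f : (Fin 3 → ℝ) →ₗ[ℝ] ℝ) (w : Fin 3 → ℝ) (hw : w ≠ 0)
    (h : f (Projectivization.mk ℝ w hw).rep ≠ 0) :
    chartPt f (Projectivization.mk ℝ w hw) = (f w)⁻¹ • w ∧ f w ≠ 0 := by
  obtain ⟨a, ha⟩ := exists_smul_eq_mk_rep ℝ w hw
  have ha' : (a : ℝ) • w = (Projectivization.mk ℝ w hw).rep := ha
  have hfa : f ((Projectivization.mk ℝ w hw).rep) = (a : ℝ) * f w := by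
    rw [← ha', map_smul, smul_eq_mul]
  have hfw : f w ≠ 0 := by
    intro h0
    rw [hfa, h0, mul_zero] at h
    exact h rfl
  refine ⟨?_, hfw⟩
  unfold chartPt
  have ha0 : (a : ℝ) ≠ 0 := a.ne_zero
  rw [← ha', map_smul, smul_eq_mul, smul_smul]
  congr 1
  field_simp

/-- Stereographic-type coordinate of the projective point of `p` as seen from the
antipode of the direction of `q`, for points on the light cone. -/
def st (q p : Fin 3 → ℝ) : ℝ :=
  (q 0 * p 1 - q 1 * p 0) / (q 2 * p 2 - q 0 * p 0 - q 1 * p 1)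

lemma coreCircle (a1 b1 a2 b2 a3 b3 : ℝ)
    (h1 : a1 ^ 2 + b1 ^ 2 = 1) (h2 : a2 ^ 2 + b2 ^ 2 = 1) (h3 : a3 ^ 2 + b3 ^ 2 = 1)
    (hd12 : 0 < (1 - a2) * b1 - (1 - a1) * b2)
    (hd23 : 0 < (1 - a3) * b2 - (1 - a2) * b3)
    (hd13 : 0 < (1 - a3) * b1 - (1 - a1) * b3) :
    ∃ α β γ : ℝ, 0 ≤ α ∧ 0 ≤ β ∧ 0 ≤ γ ∧
      a2 = α * a1 + β * a3 - γ ∧ b2 = α * b1 + β * b3 ∧ (1 : ℝ) = α + β - γ := by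
  set D12 := (1 - a2) * b1 - (1 - a1) * b2 with hD12
  set D23 := (1 - a3) * b2 - (1 - a2) * b3 with hD23
  set D13 := (1 - a3) * b1 - (1 - a1) * b3 with hD13
  have ha1 : a1 < 1 := by
    rcases lt_or_eq_of_le (by nlinarith : a1 ≤ 1) with h | h
    · exact h
    · exfalso; have hb1 : b1 = 0 := by nlinarith
      rw [hD12] at hd12; rw [← h] at hd12; simp [hb1] at hd12
  have ha2 : a2 < 1 := by
    rcases lt_or_eq_of_le (by nlinarith : a2 ≤ 1) with h | h
    · exact h
    · exfalso; have hb2 : b2 = 0 := by nlinarith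
      rw [hD12] at hd12; rw [← h] at hd12; simp [hb2] at hd12
  have ha3 : a3 < 1 := by
    rcases lt_or_eq_of_le (by nlinarith : a3 ≤ 1) with h | h
    · exact h
    · exfalso; have hb3 : b3 = 0 := by nlinarith
      rw [hD23] at hd23; rw [← h] at hd23; simp [hb3] at hd23
  have key : 2 * (1 - a1) * (1 - a2) * (1 - a3) * (D23 + D12 - D13) = D12 * D23 * D13 := by
    rw [hD12, hD23, hD13]
    linear_combination ((1 - a2) * (1 - a3) * ((1 - a2) * b3 - (1 - a3) * b2)) * h1 +
      ((1 - a1) * (1 - a3) * ((1 - a3) * b1 - (1 - a1) * b3)) * h2 +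
      ((1 - a1) * (1 - a2) * ((1 - a1) * b2 - (1 - a2) * b1)) * h3
  have hgam : 0 ≤ D23 + D12 - D13 := by
    have e1 : (0:ℝ) < 1 - a1 := by linarith
    have e2 : (0:ℝ) < 1 - a2 := by linarith
    have e3 : (0:ℝ) < 1 - a3 := by linarith
    have h6 : 0 < 2 * (1 - a1) * (1 - a2) * (1 - a3) := by
      nlinarith [mul_pos (mul_pos e1 e2) e3]
    nlinarith [mul_pos (mul_pos hd12 hd23) hd13, h6, key]
  refine ⟨D23 / D13, D12 / D13, (D23 + D12 - D13) / D13, by positivity, by positivity,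
    div_nonneg hgam hd13.le, ?_, ?_, ?_⟩
  · field_simp
    rw [hD12, hD23, hD13]; ring
  · field_simp
    rw [hD12, hD23, hD13]; ring
  · field_simp
    ring

lemma gapLemma (a0 b0 a b : ℝ) (h0 : a0 ^ 2 + b0 ^ 2 = 1) (hc : a ^ 2 + b ^ 2 = 1)
    (hne : ¬ (a = a0 ∧ b = b0)) : 0 < 1 - (a0 * a + b0 * b) := by
  rcases lt_or_eq_of_le (by nlinarith [sq_nonneg (a0 - a), sq_nonneg (b0 - b)] :
      a0 * a + b0 * b ≤ 1) with h | h
  · linarith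
  · exfalso
    exact hne ⟨by nlinarith [sq_nonneg (a0 - a), sq_nonneg (b0 - b)],
      by nlinarith [sq_nonneg (a0 - a), sq_nonneg (b0 - b)]⟩

lemma stRewrite (q p : Fin 3 → ℝ) (hq : q 2 ≠ 0) (hp : p 2 ≠ 0) :
    st q p = ((q 0 / q 2) * (p 1 / p 2) - (q 1 / q 2) * (p 0 / p 2)) /
      (1 - ((q 0 / q 2) * (p 0 / p 2) + (q 1 / q 2) * (p 1 / p 2))) := by
  rw [st]
  rw [show q 0 / q 2 * (p 1 / p 2) - q 1 / q 2 * (p 0 / p 2)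
      = (q 0 * p 1 - q 1 * p 0) / (q 2 * p 2) by field_simp]
  rw [show 1 - (q 0 / q 2 * (p 0 / p 2) + q 1 / q 2 * (p 1 / p 2))
      = (q 2 * p 2 - q 0 * p 0 - q 1 * p 1) / (q 2 * p 2) by field_simp; ring]
  rw [div_div_div_cancel_right₀ (by positivity : q 2 * p 2 ≠ 0)]

lemma ratio_pos (x y : ℝ) (h : 0 < x * y) (hx : x ≠ 0) : 0 < y / x := by
  have e : y / x = (x * y) / x ^ 2 := by field_simp
  rw [e]
  exact div_pos h (by positivity)

lemma keyOrdered (p1 p2 p3 p0 : Fin 3 → ℝ)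
    (hn1 : kleinForm p1 = 0) (hn2 : kleinForm p2 = 0) (hn3 : kleinForm p3 = 0)
    (hn0 : kleinForm p0 = 0)
    (hz1 : p1 2 ≠ 0) (hz2 : p2 2 ≠ 0) (hz3 : p3 2 ≠ 0) (hz0 : p0 2 ≠ 0)
    (hs12 : 0 < p1 2 * p2 2) (hs13 : 0 < p1 2 * p3 2) (hs02 : p0 2 * p2 2 < 0)
    (hne1 : ¬ (p1 0 / p1 2 = p0 0 / p0 2 ∧ p1 1 / p1 2 = p0 1 / p0 2))
    (hne2 : ¬ (p2 0 / p2 2 = p0 0 / p0 2 ∧ p2 1 / p2 2 = p0 1 / p0 2))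
    (hne3 : ¬ (p3 0 / p3 2 = p0 0 / p0 2 ∧ p3 1 / p3 2 = p0 1 / p0 2))
    (h12 : st p0 p2 < st p0 p1) (h23 : st p0 p3 < st p0 p2) :
    ∃ c1 c3 c0 : ℝ, 0 ≤ c1 ∧ 0 ≤ c3 ∧ 0 ≤ c0 ∧ p2 = c1 • p1 + c3 • p3 + c0 • p0 := by
  simp only [kleinForm] at hn0 hn1 hn2 hn3
  have hc0 : (p0 0 / p0 2) ^ 2 + (p0 1 / p0 2) ^ 2 = 1 := by
    field_simp; linear_combination hn0
  have hc1 : (p1 0 / p1 2) ^ 2 + (p1 1 / p1 2) ^ 2 = 1 := by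
    field_simp; linear_combination hn1
  have hc2 : (p2 0 / p2 2) ^ 2 + (p2 1 / p2 2) ^ 2 = 1 := by
    field_simp; linear_combination hn2
  have hc3 : (p3 0 / p3 2) ^ 2 + (p3 1 / p3 2) ^ 2 = 1 := by
    field_simp; linear_combination hn3
  set a0 := p0 0 / p0 2 with ha0d
  set b0 := p0 1 / p0 2 with hb0d
  set a1 := p1 0 / p1 2 with ha1d
  set b1 := p1 1 / p1 2 with hb1d
  set a2 := p2 0 / p2 2 with ha2d
  set b2 := p2 1 / p2 2 with hb2d
  set a3 := p3 0 / p3 2 with ha3d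
  set b3 := p3 1 / p3 2 with hb3d
  have hCA1 : (a0 * a1 + b0 * b1) ^ 2 + (a0 * b1 - b0 * a1) ^ 2 = 1 := by
    linear_combination (a1 ^ 2 + b1 ^ 2) * hc0 + hc1
  have hCA2 : (a0 * a2 + b0 * b2) ^ 2 + (a0 * b2 - b0 * a2) ^ 2 = 1 := by
    linear_combination (a2 ^ 2 + b2 ^ 2) * hc0 + hc2
  have hCA3 : (a0 * a3 + b0 * b3) ^ 2 + (a0 * b3 - b0 * a3) ^ 2 = 1 := by
    linear_combination (a3 ^ 2 + b3 ^ 2) * hc0 + hc3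
  have hA1p : 0 < 1 - (a0 * a1 + b0 * b1) := gapLemma a0 b0 a1 b1 hc0 hc1 hne1
  have hA2p : 0 < 1 - (a0 * a2 + b0 * b2) := gapLemma a0 b0 a2 b2 hc0 hc2 hne2
  have hA3p : 0 < 1 - (a0 * a3 + b0 * b3) := gapLemma a0 b0 a3 b3 hc0 hc3 hne3
  rw [stRewrite p0 p1 hz0 hz1, stRewrite p0 p2 hz0 hz2] at h12
  rw [stRewrite p0 p2 hz0 hz2, stRewrite p0 p3 hz0 hz3] at h23
  have h13 := h23.trans h12
  have hd12 : 0 < (1 - (a0 * a2 + b0 * b2)) * (a0 * b1 - b0 * a1) -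
      (1 - (a0 * a1 + b0 * b1)) * (a0 * b2 - b0 * a2) := by
    have := (div_lt_div_iff₀ hA2p hA1p).mp h12
    linarith
  have hd23 : 0 < (1 - (a0 * a3 + b0 * b3)) * (a0 * b2 - b0 * a2) -
      (1 - (a0 * a2 + b0 * b2)) * (a0 * b3 - b0 * a3) := by
    have := (div_lt_div_iff₀ hA3p hA2p).mp h23
    linarith
  have hd13 : 0 < (1 - (a0 * a3 + b0 * b3)) * (a0 * b1 - b0 * a1) -
      (1 - (a0 * a1 + b0 * b1)) * (a0 * b3 - b0 * a3) := by
    have := (div_lt_div_iff₀ hA3p hA1p).mp h13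
    linarith
  obtain ⟨α, β, γ, hα, hβ, hγ, eA, eB, eC⟩ :=
    coreCircle _ _ _ _ _ _ hCA1 hCA2 hCA3 hd12 hd23 hd13
  have ea : a2 = α * a1 + β * a3 - γ * a0 := by
    linear_combination a0 * eA - b0 * eB + (α * a1 + β * a3 - a2) * hc0
  have eb : b2 = α * b1 + β * b3 - γ * b0 := by
    linear_combination b0 * eA + a0 * eB + (α * b1 + β * b3 - b2) * hc0
  have h21 : 0 < p2 2 / p1 2 := ratio_pos _ _ hs12 hz1
  have h23' : 0 < p3 2 / p1 2 := ratio_pos _ _ hs13 hz1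
  have h20 : 0 < -(p2 2 / p0 2) := by
    have h' : 0 < (-p2 2) / p0 2 :=
      ratio_pos _ _ (by rw [mul_neg]; exact neg_pos.mpr hs02) hz0
    rw [neg_div] at h'; exact h'
  have h23s : 0 < p2 2 / p3 2 := by
    have e : p2 2 / p3 2 = (p2 2 / p1 2) / (p3 2 / p1 2) := by field_simp
    rw [e]; exact div_pos h21 h23'
  refine ⟨p2 2 * α / p1 2, p2 2 * β / p3 2, -(p2 2 * γ) / p0 2, ?_, ?_, ?_, ?_⟩
  · rw [show p2 2 * α / p1 2 = α * (p2 2 / p1 2) by ring]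
    exact mul_nonneg hα h21.le
  · rw [show p2 2 * β / p3 2 = β * (p2 2 / p3 2) by ring]
    exact mul_nonneg hβ h23s.le
  · rw [show -(p2 2 * γ) / p0 2 = γ * (-(p2 2 / p0 2)) by ring]
    exact mul_nonneg hγ h20.le
  · have e0 : p2 0 = p2 2 * α / p1 2 * p1 0 + p2 2 * β / p3 2 * p3 0 +
        -(p2 2 * γ) / p0 2 * p0 0 := by
      have ea' := ea
      rw [ha2d, ha1d, ha3d, ha0d] at ea'
      field_simp at ea' ⊢
      linear_combination ea'
    have e1 : p2 1 = p2 2 * α / p1 2 * p1 1 + p2 2 * β / p3 2 * p3 1 +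
        -(p2 2 * γ) / p0 2 * p0 1 := by
      have eb' := eb
      rw [hb2d, hb1d, hb3d, hb0d] at eb'
      field_simp at eb' ⊢
      linear_combination eb'
    have e2 : p2 2 = p2 2 * α / p1 2 * p1 2 + p2 2 * β / p3 2 * p3 2 +
        -(p2 2 * γ) / p0 2 * p0 2 := by
      field_simp
      linear_combination eC
    funext i
    fin_cases i <;> simp only [Pi.add_apply, Pi.smul_apply, smul_eq_mul]
    · exact e0
    · exact e1
    · exact e2

/-- The (half) light cone is convex. -/
lemma lorentzConvex (e : ℝ) (he : e ≠ 0) :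
    Convex ℝ {w : Fin 3 → ℝ | kleinForm w ≤ 0 ∧ 0 ≤ e * w 2} := by
  rintro x ⟨hx1, hx2⟩ y ⟨hy1, hy2⟩ t u ht hu htu
  simp only [kleinForm, Set.mem_setOf_eq, Pi.add_apply, Pi.smul_apply, smul_eq_mul] at *
  have he2 : 0 < e ^ 2 := by positivity
  have hz : 0 ≤ x 2 * y 2 := by nlinarith [mul_nonneg hx2 hy2]
  have hxx : x 0 ^ 2 + x 1 ^ 2 ≤ x 2 ^ 2 := by linarith
  have hyy : y 0 ^ 2 + y 1 ^ 2 ≤ y 2 ^ 2 := by linarith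
  have hprod : (x 0 ^ 2 + x 1 ^ 2) * (y 0 ^ 2 + y 1 ^ 2) ≤ x 2 ^ 2 * y 2 ^ 2 :=
    mul_le_mul hxx hyy (by positivity) (by positivity)
  have cross : x 0 * y 0 + x 1 * y 1 ≤ x 2 * y 2 := by
    nlinarith [sq_nonneg (x 0 * y 1 - x 1 * y 0), hz, hprod,
      sq_nonneg (x 0 * y 0 + x 1 * y 1 - x 2 * y 2), sq_nonneg (x 0 * y 0 + x 1 * y 1 + x 2 * y 2)]
  constructor
  · nlinarith [mul_nonneg (mul_nonneg ht hu) (sub_nonneg.mpr cross),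
      mul_nonneg (mul_nonneg ht ht) (neg_nonneg.mpr hx1),
      mul_nonneg (mul_nonneg hu hu) (neg_nonneg.mpr hy1)]
  · have e' : e * (t * x 2 + u * y 2) = t * (e * x 2) + u * (e * y 2) := by ring
    rw [e']
    exact add_nonneg (mul_nonneg ht hx2) (mul_nonneg hu hy2)

/-- Lifting an open set of `ℝP²` to the cone over it in `ℝ³`. -/
lemma isOpen_lift (S : Set (ℙ ℝ (Fin 3 → ℝ))) (hS : IsOpen S) :
    IsOpen {w : Fin 3 → ℝ | ∃ h : w ≠ 0, Projectivization.mk ℝ w h ∈ S} := by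
  have hcont : Continuous (fun v : { v : Fin 3 → ℝ // v ≠ 0 } =>
      (Quotient.mk'' v : ℙ ℝ (Fin 3 → ℝ))) := continuous_quotient_mk'
  have hU : IsOpen ((fun v : { v : Fin 3 → ℝ // v ≠ 0 } =>
      (Quotient.mk'' v : ℙ ℝ (Fin 3 → ℝ))) ⁻¹' S) := hS.preimage hcont
  have hopen : IsOpen {v : Fin 3 → ℝ | v ≠ 0} := isOpen_compl_singleton
  have himg := hopen.isOpenMap_subtype_val _ hU
  convert himg using 1
  ext w
  constructor
  · rintro ⟨hw, hmem⟩
    exact ⟨⟨w, hw⟩, hmem, rfl⟩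
  · rintro ⟨⟨w', hw'⟩, hmem, rfl⟩
    exact ⟨hw', hmem⟩

/-- Membership in a convex hull from an explicit 3-term convex combination. -/
lemma mem_hull3 (S : Set (Fin 3 → ℝ)) (x y z : Fin 3 → ℝ)
    (hx : x ∈ S) (hy : y ∈ S) (hz : z ∈ S) (c1 c2 c3 : ℝ)
    (h1 : 0 ≤ c1) (h2 : 0 ≤ c2) (h3 : 0 ≤ c3) (hsum : c1 + c2 + c3 = 1) :
    c1 • x + c2 • y + c3 • z ∈ convexHull ℝ S := by
  have hconv := convex_convexHull ℝ S
  have hmem : ∀ i : Fin 3, (![x, y, z] i) ∈ convexHull ℝ S := by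
    intro i
    fin_cases i <;> simp [subset_convexHull ℝ S hx, subset_convexHull ℝ S hy,
      subset_convexHull ℝ S hz]
  have := hconv.sum_mem (t := Finset.univ) (w := ![c1, c2, c3]) (z := ![x, y, z])
    (by intro i _; fin_cases i <;> simpa) (by simp [Fin.sum_univ_three, hsum]) (by
      intro i _; exact hmem i)
  simpa [Fin.sum_univ_three] using this

/-- Injectivity of the stereographic coordinate. -/
lemma st_inj (q p p' : Fin 3 → ℝ)
    (hnq : kleinForm q = 0) (hnp : kleinForm p = 0) (hnp' : kleinForm p' = 0)
    (hzq : q 2 ≠ 0) (hzp : p 2 ≠ 0) (hzp' : p' 2 ≠ 0)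
    (hne : ¬ (p 0 / p 2 = q 0 / q 2 ∧ p 1 / p 2 = q 1 / q 2))
    (hne' : ¬ (p' 0 / p' 2 = q 0 / q 2 ∧ p' 1 / p' 2 = q 1 / q 2))
    (hst : st q p = st q p') :
    p 0 / p 2 = p' 0 / p' 2 ∧ p 1 / p 2 = p' 1 / p' 2 := by
  simp only [kleinForm] at hnq hnp hnp'
  have hc0 : (q 0 / q 2) ^ 2 + (q 1 / q 2) ^ 2 = 1 := by
    field_simp; linear_combination hnq
  have hcp : (p 0 / p 2) ^ 2 + (p 1 / p 2) ^ 2 = 1 := by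
    field_simp; linear_combination hnp
  have hcp' : (p' 0 / p' 2) ^ 2 + (p' 1 / p' 2) ^ 2 = 1 := by
    field_simp; linear_combination hnp'
  set a0 := q 0 / q 2 with ha0d
  set b0 := q 1 / q 2 with hb0d
  set a := p 0 / p 2 with had
  set b := p 1 / p 2 with hbd
  set a' := p' 0 / p' 2 with had'
  set b' := p' 1 / p' 2 with hbd'
  have hA : 0 < 1 - (a0 * a + b0 * b) := gapLemma a0 b0 a b hc0 hcp hne
  have hA' : 0 < 1 - (a0 * a' + b0 * b') := gapLemma a0 b0 a' b' hc0 hcp' hne'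
  rw [stRewrite q p hzq hzp, stRewrite q p' hzq hzp'] at hst
  have hcross : (a0 * b - b0 * a) * (1 - (a0 * a' + b0 * b'))
      = (a0 * b' - b0 * a') * (1 - (a0 * a + b0 * b)) :=
    (div_eq_div_iff hA.ne' hA'.ne').mp hst
  -- circles for rotated coordinates
  have hB : (a0 * a + b0 * b) ^ 2 + (a0 * b - b0 * a) ^ 2 = 1 := by
    linear_combination (a ^ 2 + b ^ 2) * hc0 + hcp
  have hB' : (a0 * a' + b0 * b') ^ 2 + (a0 * b' - b0 * a') ^ 2 = 1 := by
    linear_combination (a' ^ 2 + b' ^ 2) * hc0 + hcp'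
  -- deduce equality of rotated coordinates
  have e1 : (a0 * b - b0 * a) ^ 2
      = (1 - (a0 * a + b0 * b)) * (1 + (a0 * a + b0 * b)) := by linear_combination hB
  have e2 : (a0 * b' - b0 * a') ^ 2
      = (1 - (a0 * a' + b0 * b')) * (1 + (a0 * a' + b0 * b')) := by linear_combination hB'
  have e3 : (a0 * b - b0 * a) ^ 2 * (1 - (a0 * a' + b0 * b')) ^ 2
      = (a0 * b' - b0 * a') ^ 2 * (1 - (a0 * a + b0 * b)) ^ 2 := by
    linear_combination ((a0 * b - b0 * a) * (1 - (a0 * a' + b0 * b'))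
      + (a0 * b' - b0 * a') * (1 - (a0 * a + b0 * b))) * hcross
  have e4 : (1 - (a0 * a + b0 * b)) * (1 - (a0 * a' + b0 * b'))
      * (2 * ((a0 * a + b0 * b) - (a0 * a' + b0 * b'))) = 0 := by
    linear_combination (-(1 - (a0 * a' + b0 * b')) ^ 2) * e1
      + ((1 - (a0 * a + b0 * b)) ^ 2) * e2 + e3
  have e5 : 2 * ((a0 * a + b0 * b) - (a0 * a' + b0 * b')) = 0 := by
    rcases mul_eq_zero.mp e4 with h | h
    · exact absurd h (mul_pos hA hA').ne'
    · exact h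
  have hAeq : a0 * a + b0 * b = a0 * a' + b0 * b' := by linarith
  have hBeq : a0 * b - b0 * a = a0 * b' - b0 * a' := by
    have h1 : (a0 * b - b0 * a) * (1 - (a0 * a + b0 * b))
        = (a0 * b' - b0 * a') * (1 - (a0 * a + b0 * b)) := by
      linear_combination hcross - (a0 * b - b0 * a) * hAeq
    exact mul_right_cancel₀ hA.ne' h1
  constructor
  · linear_combination (a' - a) * hc0 + a0 * hAeq - b0 * hBeq
  · linear_combination (b' - b) * hc0 + b0 * hAeq + a0 * hBeq

/-- A convex polygon in `ℝP²` with all vertices on the ideal boundary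
`∂H²` and at least five vertices is strongly ideal: its interior is disjoint from `∂H²`. -/
theorem ideal_polygon_five_vertices_strongly_ideal
    (P : Set (ℙ ℝ (Fin 3 → ℝ))) (Vs : Finset (ℙ ℝ (Fin 3 → ℝ)))
    (hP : IsPolygon P Vs) (hV : (Vs : Set (ℙ ℝ (Fin 3 → ℝ))) ⊆ idealBoundary)
    (hcard : 5 ≤ Vs.card) :
    interior P ∩ idealBoundary = ∅ := by
  obtain ⟨f, hf0, hchart, hVsP, himg, hext⟩ := hP
  rw [Set.eq_empty_iff_forall_notMem]
  rintro x ⟨hxi, hxb⟩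
  have hxP : x ∈ P := interior_subset hxi
  have hvf : ∀ v ∈ Vs, f v.rep ≠ 0 := fun v hv => hchart v (hVsP hv)
  have hvnull : ∀ v ∈ Vs, kleinForm (chartPt f v) = 0 := by
    intro v hv
    have hb : kleinForm v.rep = 0 := hV hv
    rw [chartPt, kleinForm_smul, hb, mul_zero]
  have nullz : ∀ w : Fin 3 → ℝ, kleinForm w = 0 → w ≠ 0 → w 2 ≠ 0 := by
    intro w hk hw h2
    apply hw
    simp only [kleinForm] at hk
    have h0 : w 0 = 0 := by nlinarith [sq_nonneg (w 0), sq_nonneg (w 1)]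
    have h1 : w 1 = 0 := by nlinarith [sq_nonneg (w 0), sq_nonneg (w 1)]
    funext i
    fin_cases i
    · exact h0
    · exact h1
    · exact h2
  have hvz : ∀ v ∈ Vs, chartPt f v 2 ≠ 0 := fun v hv =>
    nullz _ (hvnull v hv) (chartPt_ne_zero f v (hvf v hv))
  -- distinct vertices have distinct normalized chart points
  have hinj : ∀ v ∈ Vs, ∀ w ∈ Vs, v ≠ w →
      ¬ (chartPt f v 0 / chartPt f v 2 = chartPt f w 0 / chartPt f w 2 ∧
         chartPt f v 1 / chartPt f v 2 = chartPt f w 1 / chartPt f w 2) := by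
    rintro v hv w hw hvw ⟨hx0, hx1⟩
    apply hvw
    have hzv := hvz v hv
    have hzw := hvz w hw
    have k0 : chartPt f v 0 = (chartPt f v 2 / chartPt f w 2) * chartPt f w 0 := by
      field_simp at hx0 ⊢
      linear_combination hx0
    have k1 : chartPt f v 1 = (chartPt f v 2 / chartPt f w 2) * chartPt f w 1 := by
      field_simp at hx1 ⊢
      linear_combination hx1
    have k2 : chartPt f v 2 = (chartPt f v 2 / chartPt f w 2) * chartPt f w 2 := by
      field_simp
    have heq : (chartPt f v 2 / chartPt f w 2) • chartPt f w = chartPt f v := by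
      funext i
      fin_cases i <;> simp only [Pi.smul_apply, smul_eq_mul]
      · exact k0.symm
      · exact k1.symm
      · exact k2.symm
    calc v = Projectivization.mk ℝ (chartPt f v) (chartPt_ne_zero f v (hvf v hv)) :=
          (mk_chartPt f v (hvf v hv)).symm
      _ = Projectivization.mk ℝ (chartPt f w) (chartPt_ne_zero f w (hvf w hw)) := by
          rw [mk_eq_mk_iff']
          exact ⟨_, heq⟩
      _ = w := mk_chartPt f w (hvf w hw)
  -- the finishing move: a vertex in the convex hull of other vertices
  have fin : ∀ vm ∈ Vs, ∀ va ∈ Vs, ∀ vb ∈ Vs, ∀ v0 ∈ Vs, va ≠ vm → vb ≠ vm → v0 ≠ vm →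
      ∀ c1 c3 c0 : ℝ, 0 ≤ c1 → 0 ≤ c3 → 0 ≤ c0 →
      chartPt f vm = c1 • chartPt f va + c3 • chartPt f vb + c0 • chartPt f v0 → False := by
    intro vm hm va ha vb hb v0 h0 hna hnb hn0 c1 c3 c0 hc1 hc3 hc0 heq
    have hsum : c1 + c3 + c0 = 1 := by
      have h1 := f_chartPt f vm (hvf vm hm)
      have h2 := congrArg f heq
      rw [map_add, map_add, map_smul, map_smul, map_smul,
        f_chartPt f va (hvf va ha), f_chartPt f vb (hvf vb hb),
        f_chartPt f v0 (hvf v0 h0), h1] at h2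
      simpa [smul_eq_mul] using h2.symm
    apply hext vm hm
    rw [heq]
    refine mem_hull3 _ _ _ _ ?_ ?_ ?_ c1 c3 c0 hc1 hc3 hc0 hsum
    · exact ⟨va, Finset.mem_coe.mpr (Finset.mem_erase.mpr ⟨hna, ha⟩), rfl⟩
    · exact ⟨vb, Finset.mem_coe.mpr (Finset.mem_erase.mpr ⟨hnb, hb⟩), rfl⟩
    · exact ⟨v0, Finset.mem_coe.mpr (Finset.mem_erase.mpr ⟨hn0, h0⟩), rfl⟩
  -- Step A: all vertices lie on the same nappe of the cone
  have hsame : ∀ v ∈ Vs, ∀ w ∈ Vs, 0 < chartPt f v 2 * chartPt f w 2 := by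
    -- a block handling a triple on one side and a point on the other
    have blk : ∀ v1 ∈ Vs, ∀ v2 ∈ Vs, ∀ v3 ∈ Vs, ∀ v0 ∈ Vs,
        v1 ≠ v2 → v1 ≠ v3 → v2 ≠ v3 →
        0 < chartPt f v1 2 * chartPt f v2 2 → 0 < chartPt f v1 2 * chartPt f v3 2 →
        0 < chartPt f v2 2 * chartPt f v3 2 →
        chartPt f v0 2 * chartPt f v1 2 < 0 → chartPt f v0 2 * chartPt f v2 2 < 0 →
        chartPt f v0 2 * chartPt f v3 2 < 0 → False := by
      intro v1 h1 v2 h2 v3 h3 v0 h0 h12 h13 h23 hs12 hs13 hs23 hs01 hs02 hs03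
      have hne01 : v0 ≠ v1 := by
        rintro rfl; nlinarith [mul_self_nonneg (chartPt f v0 2)]
      have hne02 : v0 ≠ v2 := by
        rintro rfl; nlinarith [mul_self_nonneg (chartPt f v0 2)]
      have hne03 : v0 ≠ v3 := by
        rintro rfl; nlinarith [mul_self_nonneg (chartPt f v0 2)]
      -- abbreviations
      have N1 := hvnull v1 h1; have N2 := hvnull v2 h2; have N3 := hvnull v3 h3
      have N0 := hvnull v0 h0
      have Z1 := hvz v1 h1; have Z2 := hvz v2 h2; have Z3 := hvz v3 h3; have Z0 := hvz v0 h0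
      have E1 := hinj v1 h1 v0 h0 hne01.symm
      have E2 := hinj v2 h2 v0 h0 hne02.symm
      have E3 := hinj v3 h3 v0 h0 hne03.symm
      -- the stereographic coordinates are pairwise distinct
      have hstne12 : st (chartPt f v0) (chartPt f v1) ≠ st (chartPt f v0) (chartPt f v2) :=
        fun h => hinj v1 h1 v2 h2 h12 (st_inj _ _ _ N0 N1 N2 Z0 Z1 Z2 E1 E2 h)
      have hstne13 : st (chartPt f v0) (chartPt f v1) ≠ st (chartPt f v0) (chartPt f v3) :=
        fun h => hinj v1 h1 v3 h3 h13 (st_inj _ _ _ N0 N1 N3 Z0 Z1 Z3 E1 E3 h)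
      have hstne23 : st (chartPt f v0) (chartPt f v2) ≠ st (chartPt f v0) (chartPt f v3) :=
        fun h => hinj v2 h2 v3 h3 h23 (st_inj _ _ _ N0 N2 N3 Z0 Z2 Z3 E2 E3 h)
      -- symmetric products
      have hs21 : 0 < chartPt f v2 2 * chartPt f v1 2 := by rw [mul_comm]; exact hs12
      have hs31 : 0 < chartPt f v3 2 * chartPt f v1 2 := by rw [mul_comm]; exact hs13
      have hs32 : 0 < chartPt f v3 2 * chartPt f v2 2 := by rw [mul_comm]; exact hs23
      rcases lt_trichotomy (st (chartPt f v0) (chartPt f v1)) (st (chartPt f v0) (chartPt f v2))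
        with t12 | t12 | t12
      · rcases lt_trichotomy (st (chartPt f v0) (chartPt f v2)) (st (chartPt f v0) (chartPt f v3))
          with t23 | t23 | t23
        · -- t1 < t2 < t3 : middle is v2, order (3,2,1)
          obtain ⟨c1, c3, c0, hc1, hc3, hc0, heq⟩ :=
            keyOrdered (chartPt f v3) (chartPt f v2) (chartPt f v1) (chartPt f v0)
              N3 N2 N1 N0 Z3 Z2 Z1 Z0 hs32 hs31 hs02 E3 E2 E1 t23 t12
          exact fin v2 h2 v3 h3 v1 h1 v0 h0 h23.symm h12 hne02 c1 c3 c0 hc1 hc3 hc0 heq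
        · exact hstne23 t23
        · rcases lt_trichotomy (st (chartPt f v0) (chartPt f v1)) (st (chartPt f v0) (chartPt f v3))
            with t13 | t13 | t13
          · -- t1 < t3 < t2 : middle is v3, order (2,3,1)
            obtain ⟨c1, c3, c0, hc1, hc3, hc0, heq⟩ :=
              keyOrdered (chartPt f v2) (chartPt f v3) (chartPt f v1) (chartPt f v0)
                N2 N3 N1 N0 Z2 Z3 Z1 Z0 hs23 hs21 hs03 E2 E3 E1 t23 t13
            exact fin v3 h3 v2 h2 v1 h1 v0 h0 h23 h13 hne03 c1 c3 c0 hc1 hc3 hc0 heq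
          · exact hstne13 t13
          · -- t3 < t1 < t2 : middle is v1, order (2,1,3)
            obtain ⟨c1, c3, c0, hc1, hc3, hc0, heq⟩ :=
              keyOrdered (chartPt f v2) (chartPt f v1) (chartPt f v3) (chartPt f v0)
                N2 N1 N3 N0 Z2 Z1 Z3 Z0 hs21 hs23 hs01 E2 E1 E3 t12 t13
            exact fin v1 h1 v2 h2 v3 h3 v0 h0 h12.symm h13.symm hne01 c1 c3 c0 hc1 hc3 hc0 heq
      · exact hstne12 t12
      · rcases lt_trichotomy (st (chartPt f v0) (chartPt f v1)) (st (chartPt f v0) (chartPt f v3))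
          with t13 | t13 | t13
        · -- t2 < t1 < t3 : middle is v1, order (3,1,2)
          obtain ⟨c1, c3, c0, hc1, hc3, hc0, heq⟩ :=
            keyOrdered (chartPt f v3) (chartPt f v1) (chartPt f v2) (chartPt f v0)
              N3 N1 N2 N0 Z3 Z1 Z2 Z0 hs31 hs32 hs01 E3 E1 E2 t13 t12
          exact fin v1 h1 v3 h3 v2 h2 v0 h0 h13.symm h12.symm hne01 c1 c3 c0 hc1 hc3 hc0 heq
        · exact hstne13 t13
        · rcases lt_trichotomy (st (chartPt f v0) (chartPt f v2)) (st (chartPt f v0) (chartPt f v3))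
            with t23 | t23 | t23
          · -- t2 < t3 < t1 : middle is v3, order (1,3,2)
            obtain ⟨c1, c3, c0, hc1, hc3, hc0, heq⟩ :=
              keyOrdered (chartPt f v1) (chartPt f v3) (chartPt f v2) (chartPt f v0)
                N1 N3 N2 N0 Z1 Z3 Z2 Z0 hs13 hs12 hs03 E1 E3 E2 t13 t23
            exact fin v3 h3 v1 h1 v2 h2 v0 h0 h13 h23 hne03 c1 c3 c0 hc1 hc3 hc0 heq
          · exact hstne23 t23
          · -- t3 < t2 < t1 : middle is v2, order (1,2,3)
            obtain ⟨c1, c3, c0, hc1, hc3, hc0, heq⟩ :=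
              keyOrdered (chartPt f v1) (chartPt f v2) (chartPt f v3) (chartPt f v0)
                N1 N2 N3 N0 Z1 Z2 Z3 Z0 hs12 hs13 hs02 E1 E2 E3 t12 t23
            exact fin v2 h2 v1 h1 v3 h3 v0 h0 h12 h23.symm hne02 c1 c3 c0 hc1 hc3 hc0 heq
    -- now the counting argument
    by_contra hcon
    push_neg at hcon
    obtain ⟨v', hv', w', hw', hprod⟩ := hcon
    have hprod' : chartPt f v' 2 * chartPt f w' 2 < 0 :=
      lt_of_le_of_ne hprod (mul_ne_zero (hvz v' hv') (hvz w' hw'))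
    set T := Vs.filter (fun v => 0 < chartPt f v 2) with hT
    set T' := Vs.filter (fun v => chartPt f v 2 < 0) with hT'
    have hsplit : ∀ v ∈ Vs, v ∈ T ∨ v ∈ T' := by
      intro v hv
      rcases (hvz v hv).lt_or_gt with h | h
      · right; exact Finset.mem_filter.mpr ⟨hv, h⟩
      · left; exact Finset.mem_filter.mpr ⟨hv, h⟩
    have hunion : Vs ⊆ T ∪ T' := by
      intro v hv
      rcases hsplit v hv with h | h
      · exact Finset.mem_union_left _ h
      · exact Finset.mem_union_right _ h
    have hcards : Vs.card ≤ T.card + T'.card :=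
      le_trans (Finset.card_le_card hunion) (Finset.card_union_le _ _)
    -- there are points with negative and positive z
    have hexneg : ∃ u ∈ Vs, chartPt f u 2 < 0 := by
      rcases mul_neg_iff.mp hprod' with ⟨_, h2⟩ | ⟨h1, _⟩
      · exact ⟨w', hw', h2⟩
      · exact ⟨v', hv', h1⟩
    have hexpos : ∃ u ∈ Vs, 0 < chartPt f u 2 := by
      rcases mul_neg_iff.mp hprod' with ⟨h1, _⟩ | ⟨_, h2⟩
      · exact ⟨v', hv', h1⟩
      · exact ⟨w', hw', h2⟩
    rcases (by omega : 3 ≤ T.card ∨ 3 ≤ T'.card) with hbig | hbig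
    · obtain ⟨S3, hS3sub, hS3card⟩ := Finset.exists_subset_card_eq hbig
      obtain ⟨a, b, c, hab, hac, hbc, rfl⟩ := Finset.card_eq_three.mp hS3card
      have ha : a ∈ T := hS3sub (by simp)
      have hb : b ∈ T := hS3sub (by simp)
      have hc : c ∈ T := hS3sub (by simp)
      obtain ⟨u0, hu0, hu0z⟩ := hexneg
      have haz := (Finset.mem_filter.mp ha).2
      have hbz := (Finset.mem_filter.mp hb).2
      have hcz := (Finset.mem_filter.mp hc).2
      exact blk a (Finset.mem_filter.mp ha).1 b (Finset.mem_filter.mp hb).1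
        c (Finset.mem_filter.mp hc).1 u0 hu0 hab hac hbc
        (mul_pos haz hbz) (mul_pos haz hcz) (mul_pos hbz hcz)
        (mul_neg_of_neg_of_pos hu0z haz) (mul_neg_of_neg_of_pos hu0z hbz)
        (mul_neg_of_neg_of_pos hu0z hcz)
    · obtain ⟨S3, hS3sub, hS3card⟩ := Finset.exists_subset_card_eq hbig
      obtain ⟨a, b, c, hab, hac, hbc, rfl⟩ := Finset.card_eq_three.mp hS3card
      have ha : a ∈ T' := hS3sub (by simp)
      have hb : b ∈ T' := hS3sub (by simp)
      have hc : c ∈ T' := hS3sub (by simp)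
      obtain ⟨u0, hu0, hu0z⟩ := hexpos
      have haz := (Finset.mem_filter.mp ha).2
      have hbz := (Finset.mem_filter.mp hb).2
      have hcz := (Finset.mem_filter.mp hc).2
      exact blk a (Finset.mem_filter.mp ha).1 b (Finset.mem_filter.mp hb).1
        c (Finset.mem_filter.mp hc).1 u0 hu0 hab hac hbc
        (mul_pos_of_neg_of_neg haz hbz) (mul_pos_of_neg_of_neg haz hcz)
        (mul_pos_of_neg_of_neg hbz hcz)
        (mul_neg_of_pos_of_neg hu0z haz) (mul_neg_of_pos_of_neg hu0z hbz)
        (mul_neg_of_pos_of_neg hu0z hcz)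
  -- the convex hull lies inside the solid light cone
  obtain ⟨v5, hv5⟩ := Finset.card_pos.mp (by omega : 0 < Vs.card)
  have hHull : convexHull ℝ (chartPt f '' (Vs : Set (ℙ ℝ (Fin 3 → ℝ)))) ⊆
      {w : Fin 3 → ℝ | kleinForm w ≤ 0 ∧ 0 ≤ chartPt f v5 2 * w 2} := by
    apply convexHull_min ?_ (lorentzConvex _ (hvz v5 hv5))
    rintro w ⟨v, hv, rfl⟩
    have hv' : v ∈ Vs := hv
    exact ⟨le_of_eq (hvnull v hv'), (hsame v5 hv5 v hv').le⟩
  -- the open cone over the interior of P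
  have hWopen := isOpen_lift (interior P) isOpen_interior
  have hWsub : ∀ w : Fin 3 → ℝ, (∃ h : w ≠ 0, Projectivization.mk ℝ w h ∈ interior P) →
      kleinForm w ≤ 0 := by
    rintro w ⟨hw, hwm⟩
    have hmemP : Projectivization.mk ℝ w hw ∈ P := interior_subset hwm
    have hfrep := hchart _ hmemP
    obtain ⟨hcp, hfw⟩ := chartPt_mk f w hw hfrep
    have himgmem : chartPt f (Projectivization.mk ℝ w hw) ∈ chartPt f '' P :=
      ⟨_, hmemP, rfl⟩
    rw [himg] at himgmem
    have hk := (hHull himgmem).1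
    rw [hcp, kleinForm_smul] at hk
    have hfw2 : 0 < ((f w)⁻¹) ^ 2 := by positivity
    nlinarith [hk, hfw2]
  -- the chart point of x is in the open cone
  have hfx := hchart x hxP
  have hpnull : kleinForm (chartPt f x) = 0 := by
    have hb : kleinForm x.rep = 0 := hxb
    rw [chartPt, kleinForm_smul, hb, mul_zero]
  have hpz : chartPt f x 2 ≠ 0 := nullz _ hpnull (chartPt_ne_zero f x hfx)
  have hpW : chartPt f x ∈ {w : Fin 3 → ℝ | ∃ h : w ≠ 0, Projectivization.mk ℝ w h ∈ interior P} := by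
    refine ⟨chartPt_ne_zero f x hfx, ?_⟩
    rw [mk_chartPt f x hfx]
    exact hxi
  -- perturb along the cone direction to get a positive value of the Klein form
  obtain ⟨r, hr, hball⟩ := Metric.isOpen_iff.mp hWopen _ hpW
  set u : Fin 3 → ℝ := ![chartPt f x 0, chartPt f x 1, 0] with hu
  set d : ℝ := r / (2 * (‖u‖ + 1)) with hd
  have hd0 : 0 < d := by
    rw [hd]
    have : (0:ℝ) < ‖u‖ + 1 := by positivity
    positivity
  have hmem : chartPt f x + d • u ∈
      {w : Fin 3 → ℝ | ∃ h : w ≠ 0, Projectivization.mk ℝ w h ∈ interior P} := by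
    apply hball
    rw [Metric.mem_ball, dist_eq_norm]
    have h1 : chartPt f x + d • u - chartPt f x = d • u := by abel
    rw [h1, norm_smul, Real.norm_of_nonneg hd0.le]
    have h2 : d * (‖u‖ + 1) = r / 2 := by
      rw [hd]; field_simp
    nlinarith [norm_nonneg u, hd0, hr]
  have hk := hWsub _ hmem
  -- compute the Klein form of the perturbed point
  have hcoord0 : (chartPt f x + d • u) 0 = (1 + d) * chartPt f x 0 := by
    simp [hu, Pi.add_apply, Pi.smul_apply, smul_eq_mul]; ring
  have hcoord1 : (chartPt f x + d • u) 1 = (1 + d) * chartPt f x 1 := by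
    simp [hu, Pi.add_apply, Pi.smul_apply, smul_eq_mul]; ring
  have hcoord2 : (chartPt f x + d • u) 2 = chartPt f x 2 := by
    simp [hu, Pi.add_apply, Pi.smul_apply, smul_eq_mul]
  have hkval : kleinForm (chartPt f x + d • u)
      = ((1 + d) ^ 2 - 1) * (chartPt f x 2) ^ 2 := by
    rw [kleinForm, hcoord0, hcoord1, hcoord2]
    have hb : kleinForm (chartPt f x) = 0 := hpnull
    rw [kleinForm] at hb
    nlinarith [hb]
  have hpos : 0 < kleinForm (chartPt f x + d • u) := by
    rw [hkval]
    have h2 : 0 < (chartPt f x 2) ^ 2 := by positivity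
    have h3 : (0:ℝ) < (1 + d) ^ 2 - 1 := by nlinarith [hd0, sq_nonneg d]
    exact mul_pos h3 h2
  linarith [hk, hpos]
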